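/- Let (X, μ) be a finite measure space and F : ℝ^m → [0,∞] (extended nonnegative reals) convex and lower semicontinuous. Let v_n, v ∈ L²(μ; ℝ^m) and suppose v_n converges to v weakly in L², i.e. ∫_X ⟨v_n(x), g(x)⟩ dμ(x) → ∫_X ⟨v(x), g(x)⟩ dμ(x) for every g ∈ L²(μ; ℝ^m). Then liminf_{n→∞} ∫_X F(v_n(x)) dμ(x) ≥ ∫_X F(v(x)) dμ(x). -/

import Mathlib

open MeasureTheory Filter Topology
open scoped ENNReal RealInnerProductSpace

/-- Convexity for an extended-nonnegative-real-valued function on a real vector space. -/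
def ConvexENN {E : Type*} [AddCommMonoid E] [Module ℝ E] (F : E → ℝ≥0∞) : Prop :=
  ∀ x y : E, ∀ a b : ℝ, 0 ≤ a → 0 ≤ b → a + b = 1 →
    F (a • x + b • y) ≤ ENNReal.ofReal a * F x + ENNReal.ofReal b * F y

/-- Lower semicontinuity along a convergent sequence. -/
lemma lsc_le_liminf_seq {E : Type*} [TopologicalSpace E] {F : E → ℝ≥0∞}
    (hlsc : LowerSemicontinuous F) {z : ℕ → E} {p : E}
    (hz : Filter.Tendsto z atTop (𝓝 p)) :
    F p ≤ liminf (fun k => F (z k)) atTop := by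
  rw [le_liminf_iff]
  intro b hb
  exact hz.eventually (hlsc p b hb)

/-- **Weak lower semicontinuity of convex integral functionals.**  On a finite measure space,
if `F : ℝ^m → [0, ∞]` is convex and lower semicontinuous and `v_n → v` weakly in
`L²(μ; ℝ^m)`, then `liminf_n ∫ F(v_n) dμ ≥ ∫ F(v) dμ`. -/
theorem stmt11 {X : Type*} [MeasurableSpace X] (μ : Measure X) [IsFiniteMeasure μ]
    (m : ℕ) (F : EuclideanSpace ℝ (Fin m) → ℝ≥0∞)
    (hconv : ConvexENN F) (hlsc : LowerSemicontinuous F)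
    (v : ℕ → X → EuclideanSpace ℝ (Fin m)) (w : X → EuclideanSpace ℝ (Fin m))
    (hv : ∀ n, MemLp (v n) 2 μ) (hw : MemLp w 2 μ)
    (hweak : ∀ g : X → EuclideanSpace ℝ (Fin m), MemLp g 2 μ →
      Tendsto (fun n => ∫ x, ⟪v n x, g x⟫ ∂μ) atTop (𝓝 (∫ x, ⟪w x, g x⟫ ∂μ))) :
    (∫⁻ x, F (w x) ∂μ) ≤ liminf (fun n => ∫⁻ x, F (v n x) ∂μ) atTop := by
  classical
  have hFmeas : Measurable F := hlsc.measurable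
  set I : ℕ → ℝ≥0∞ := fun n => ∫⁻ x, F (v n x) ∂μ with hIdef
  set L := liminf I atTop with hLdef
  rcases eq_top_or_lt_top L with hLtop | hLlt
  · exact hLtop ▸ le_top
  refine ENNReal.le_of_forall_pos_le_add fun ε hε _ => ?_
  -- extract a subsequence along which the integrals are below `L + ε`
  have hfreq : ∃ᶠ n in atTop, I n < L + ε := by
    exact frequently_lt_of_liminf_lt (by isBoundedDefault)
      (ENNReal.lt_add_right hLlt.ne (ENNReal.coe_ne_zero.2 hε.ne'))
  obtain ⟨φ, hφmono, hφ⟩ := extraction_of_frequently_atTop hfreq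
  -- move to the Hilbert space L²
  set V : ℕ → Lp (EuclideanSpace ℝ (Fin m)) 2 μ := fun n => (hv n).toLp (v n) with hVdef
  set W : Lp (EuclideanSpace ℝ (Fin m)) 2 μ := hw.toLp w with hWdef
  -- the sublevel set of the integral functional in L²
  set S : Set (Lp (EuclideanSpace ℝ (Fin m)) 2 μ) := {f | ∫⁻ x, F (f x) ∂μ ≤ L + ε} with hSdef
  have hmeasF : ∀ f : Lp (EuclideanSpace ℝ (Fin m)) 2 μ, AEMeasurable (fun x => F (f x)) μ := fun f =>
    hFmeas.comp_aemeasurable (Lp.aestronglyMeasurable f).aemeasurable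
  have hSconv : Convex ℝ S := by
    intro f hf g hg a b ha hb hab
    have h1 : (∫⁻ x, F ((a • f + b • g : Lp (EuclideanSpace ℝ (Fin m)) 2 μ) x) ∂μ)
        = ∫⁻ x, F (a • f x + b • g x) ∂μ := by
      refine lintegral_congr_ae ?_
      filter_upwards [Lp.coeFn_add (a • f) (b • g), Lp.coeFn_smul a f,
        Lp.coeFn_smul b g] with x h1 h2 h3
      rw [h1, Pi.add_apply, h2, h3, Pi.smul_apply, Pi.smul_apply]
    have h2 : (∫⁻ x, F (a • f x + b • g x) ∂μ)
        ≤ ENNReal.ofReal a * ∫⁻ x, F (f x) ∂μ + ENNReal.ofReal b * ∫⁻ x, F (g x) ∂μ := by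
      calc (∫⁻ x, F (a • f x + b • g x) ∂μ)
          ≤ ∫⁻ x, (ENNReal.ofReal a * F (f x) + ENNReal.ofReal b * F (g x)) ∂μ :=
            lintegral_mono fun x => hconv _ _ a b ha hb hab
        _ = _ := by
            rw [lintegral_add_left' ((hmeasF f).const_mul _),
              lintegral_const_mul'' _ (hmeasF f), lintegral_const_mul'' _ (hmeasF g)]
    have hab' : ENNReal.ofReal a + ENNReal.ofReal b = 1 := by
      rw [← ENNReal.ofReal_add ha hb, hab, ENNReal.ofReal_one]
    calc (∫⁻ x, F ((a • f + b • g : Lp (EuclideanSpace ℝ (Fin m)) 2 μ) x) ∂μ)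
        ≤ ENNReal.ofReal a * ∫⁻ x, F (f x) ∂μ + ENNReal.ofReal b * ∫⁻ x, F (g x) ∂μ :=
          h1 ▸ h2
      _ ≤ ENNReal.ofReal a * (L + ε) + ENNReal.ofReal b * (L + ε) := by
          gcongr
          exacts [hf, hg]
      _ = (ENNReal.ofReal a + ENNReal.ofReal b) * (L + ε) := by ring
      _ = L + ε := by rw [hab', one_mul]
  have hSclosed : IsClosed S := by
    set_option synthInstance.maxHeartbeats 1000000 in
    refine IsSeqClosed.isClosed ?_
    intro f g hfS hfg
    obtain ⟨ns, hns, hae⟩ := (tendstoInMeasure_of_tendsto_Lp hfg).exists_seq_tendsto_ae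
    have hstep : (∫⁻ x, F (g x) ∂μ)
        ≤ ∫⁻ x, liminf (fun k => F (f (ns k) x)) atTop ∂μ := by
      refine lintegral_mono_ae ?_
      filter_upwards [hae] with x hx
      exact lsc_le_liminf_seq hlsc hx
    refine hstep.trans ?_
    refine (lintegral_liminf_le' fun k => hmeasF (f (ns k))).trans ?_
    refine (liminf_le_liminf (Filter.Eventually.of_forall fun k => hfS (ns k))).trans ?_
    simp [liminf_const]
  -- the subsequence lies in S
  have hVS : ∀ j, V (φ j) ∈ S := by
    intro j
    have : (∫⁻ x, F ((V (φ j)) x) ∂μ) = I (φ j) := by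
      refine lintegral_congr_ae ?_
      filter_upwards [(hv (φ j)).coeFn_toLp] with x hx
      rw [hx]
    rw [hSdef, Set.mem_setOf_eq, this]
    exact (hφ j).le
  -- W belongs to the closed convex hull of the subsequence
  set K : Set (Lp (EuclideanSpace ℝ (Fin m)) 2 μ) := closure (convexHull ℝ (Set.range fun j => V (φ j))) with hKdef
  have hKconv : Convex ℝ K := (convex_convexHull ℝ _).closure
  have hKclosed : IsClosed K := isClosed_closure
  have hKne : K.Nonempty :=
    ⟨V (φ 0), subset_closure (subset_convexHull ℝ _ (Set.mem_range_self 0))⟩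
  obtain ⟨P, hPK, hPmin⟩ :=
    exists_norm_eq_iInf_of_complete_convex hKne hKclosed.isComplete hKconv W
  have hineq := (norm_eq_iInf_iff_real_inner_le_zero hKconv hPK).mp hPmin
  -- weak convergence of the inner products against W - P
  have hg : MemLp (⇑(W - P)) 2 μ := Lp.memLp _
  have h1 : ∀ n, ⟪W - P, V n⟫ = ∫ x, ⟪v n x, (W - P : Lp (EuclideanSpace ℝ (Fin m)) 2 μ) x⟫ ∂μ := by
    intro n
    rw [real_inner_comm, L2.inner_def]
    refine integral_congr_ae ?_
    filter_upwards [(hv n).coeFn_toLp] with x hx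
    rw [hVdef, hx]
  have h2 : ⟪W - P, W⟫ = ∫ x, ⟪w x, (W - P : Lp (EuclideanSpace ℝ (Fin m)) 2 μ) x⟫ ∂μ := by
    rw [real_inner_comm, L2.inner_def]
    refine integral_congr_ae ?_
    filter_upwards [hw.coeFn_toLp] with x hx
    rw [hWdef, hx]
  have htend : Tendsto (fun n => ⟪W - P, V n⟫) atTop (𝓝 ⟪W - P, W⟫) := by
    have := hweak (⇑(W - P)) hg
    rw [show (fun n => ∫ x, ⟪v n x, (W - P : Lp (EuclideanSpace ℝ (Fin m)) 2 μ) x⟫ ∂μ) = fun n => ⟪W - P, V n⟫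
      from funext fun n => (h1 n).symm, ← h2] at this
    exact this
  have htend2 : Tendsto (fun j => ⟪W - P, V (φ j)⟫) atTop (𝓝 ⟪W - P, W⟫) :=
    htend.comp hφmono.tendsto_atTop
  have hle : ⟪W - P, W⟫ ≤ ⟪W - P, P⟫ := by
    refine le_of_tendsto htend2 (Filter.Eventually.of_forall fun j => ?_)
    have h := hineq (V (φ j)) (subset_closure (subset_convexHull ℝ _ (Set.mem_range_self j)))
    rw [inner_sub_right] at h
    linarith
  have hWP : W = P := by
    have h3 : ⟪W - P, W - P⟫ ≤ 0 := by
      rw [inner_sub_right]; linarith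
    have h4 : W - P = 0 := by
      have := real_inner_self_nonneg (x := W - P)
      have h5 : ⟪W - P, W - P⟫ = 0 := le_antisymm h3 this
      exact inner_self_eq_zero.mp h5
    exact sub_eq_zero.mp h4
  have hWK : W ∈ K := hWP ▸ hPK
  have hWS : W ∈ S := by
    refine (closure_minimal (convexHull_min ?_ hSconv) hSclosed) hWK
    rintro _ ⟨j, rfl⟩
    exact hVS j
  have hfin : (∫⁻ x, F (w x) ∂μ) = ∫⁻ x, F (W x) ∂μ := by
    refine lintegral_congr_ae ?_
    filter_upwards [hw.coeFn_toLp] with x hx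
    rw [hWdef, hx]
  exact hfin ▸ hWS
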